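/- Let P be a nonnegative real random variable and J a random variable with the Gamma distribution with shape k > 0 and scale θ > 0, with P and J independent, and let β > 0. Then ∑_{m=0}^{⌊k⌋−1} (1/m!)·E[(P/(θβ))^m · e^{−P/(θβ)}] ≤ ℙ(P ≤ β·J) ≤ ∑_{m=0}^{⌈k⌉−1} (1/m!)·E[(P/(θβ))^m · e^{−P/(θβ)}]. (Here E[P^m e^{−P/(θβ)}] is the m-th derivative of the Laplace transform s ↦ E[e^{−sP}] of P, up to sign, evaluated at s = 1/(θβ); each expectation is finite since the integrand is bounded.) -/

import Mathlib

open MeasureTheory ProbabilityTheory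

/-- The density of the Gamma distribution with shape `k` and scale `θ`:
`x ↦ x^(k-1) * exp(-x/θ) / (Γ(k) * θ^k)` on `(0, ∞)`. -/
noncomputable def gammaDensity (k θ x : ℝ) : ℝ :=
  Set.indicator (Set.Ioi 0) (fun y => y ^ (k - 1) * Real.exp (-y / θ) / (Real.Gamma k * θ ^ k)) x

/-- `J` has the Gamma distribution with shape `k` and scale `θ` under `μ`. -/
def IsGammaLaw {Ω : Type*} [MeasurableSpace Ω] (μ : Measure Ω) (J : Ω → ℝ) (k θ : ℝ) : Prop :=
  Measure.map J μ = volume.withDensity (fun x => ENNReal.ofReal (gammaDensity k θ x))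

open scoped ENNReal NNReal
open Real Set Filter Topology

-- polynomial part derivative
lemma hasDerivAt_gsum (r : ℝ) (n : ℕ) (t : ℝ) :
    HasDerivAt (fun t => ∑ m ∈ Finset.range (n+1), (r*t)^m / m.factorial)
      (r * ∑ m ∈ Finset.range n, (r*t)^m / m.factorial) t := by
  induction n with
  | zero =>
      simp only [Finset.range_one, Finset.sum_singleton, pow_zero, Nat.factorial_zero,
        Finset.range_zero, Finset.sum_empty, mul_zero]
      simpa using hasDerivAt_const t (1:ℝ)
  | succ n ih =>
      have hterm : HasDerivAt (fun t => (r*t)^(n+1) / (n+1).factorial)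
          ((((n+1:ℕ):ℝ) * (r*t)^n * (r*1)) / (n+1).factorial) t := by
        exact (((hasDerivAt_id t).const_mul r).pow (n+1)).div_const _
      have := ih.add hterm
      have h1 : (fun t => (∑ m ∈ Finset.range (n+1), (r*t)^m / m.factorial)
          + (r*t)^(n+1) / (n+1).factorial)
          = fun t => ∑ m ∈ Finset.range (n+2), (r*t)^m / m.factorial := by
        funext t; exact (Finset.sum_range_succ _ (n+1)).symm
      simp only [Pi.add_def] at this
      rw [h1] at this
      refine this.congr_deriv ?_
      rw [Finset.sum_range_succ]
      have hfac : ((n+1).factorial : ℝ) = ((n+1:ℕ):ℝ) * (n.factorial : ℝ) := by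
        rw [Nat.factorial_succ]; push_cast; ring
      rw [hfac]
      have : ((n:ℝ)+1) ≠ 0 := by positivity
      field_simp

lemma hasDerivAt_gtail (r : ℝ) (n : ℕ) (t : ℝ) :
    HasDerivAt (fun t => Real.exp (-(r*t)) * ∑ m ∈ Finset.range (n+1), (r*t)^m / m.factorial)
      (-(r * Real.exp (-(r*t)) * (r*t)^n / n.factorial)) t := by
  have hexp : HasDerivAt (fun t => Real.exp (-(r*t))) (Real.exp (-(r*t)) * (-(r*1))) t :=
    (((hasDerivAt_id t).const_mul r).neg).exp
  have := hexp.mul (hasDerivAt_gsum r n t)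
  exact this.congr_deriv (by rw [Finset.sum_range_succ]; ring)

lemma tendsto_gtail (r : ℝ) (hr : 0 < r) (n : ℕ) :
    Tendsto (fun t => Real.exp (-(r*t)) * ∑ m ∈ Finset.range (n+1), (r*t)^m / m.factorial)
      atTop (𝓝 0) := by
  have key : ∀ m : ℕ, Tendsto (fun t => Real.exp (-(r*t)) * ((r*t)^m / m.factorial))
      atTop (𝓝 0) := by
    intro m
    have h1 : Tendsto (fun y : ℝ => y ^ m * Real.exp (-y) / m.factorial) atTop (𝓝 0) := by
      simpa using (tendsto_pow_mul_exp_neg_atTop_nhds_zero m).div_const (m.factorial : ℝ)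
    have h2 : Tendsto (fun t : ℝ => r * t) atTop atTop :=
      tendsto_id.const_mul_atTop hr
    have heq : (fun t => Real.exp (-(r*t)) * ((r*t)^m / (m.factorial:ℝ)))
        = (fun y : ℝ => y ^ m * Real.exp (-y) / m.factorial) ∘ (fun t => r * t) := by
      funext t; simp [Function.comp]; ring
    rw [heq]; exact h1.comp h2
  have := tendsto_finset_sum (Finset.range (n+1)) (fun m _ => key m)
  simp only [Finset.sum_const_zero] at this
  convert this using 2 with t
  rw [Finset.mul_sum]

lemma gamma_tail_nat (n : ℕ) {r : ℝ} (hr : 0 < r) {x : ℝ} (hx : 0 ≤ x) :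
    ∫ t in Ioi x, gammaPDFReal (n+1) r t
      = Real.exp (-(r*x)) * ∑ m ∈ Finset.range (n+1), (r*x)^m / m.factorial := by
  set g : ℝ → ℝ := fun t => -(Real.exp (-(r*t)) * ∑ m ∈ Finset.range (n+1), (r*t)^m / m.factorial)
    with hg
  have hpdf_eq : ∀ t ∈ Ioi x, gammaPDFReal (n+1) r t
      = r * Real.exp (-(r*t)) * (r*t)^n / n.factorial := by
    intro t ht
    have ht0 : 0 < t := lt_of_le_of_lt hx ht
    rw [gammaPDFReal, if_pos ht0.le]
    have h1 : ((n:ℝ)+1) - 1 = (n:ℝ) := by ring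
    have h2 : Real.Gamma ((n:ℝ)+1) = n.factorial := Real.Gamma_nat_eq_factorial n
    rw [h1, h2]
    have h3 : t ^ (n:ℝ) = t ^ n := Real.rpow_natCast t n
    have h4 : r ^ ((n:ℝ)+1) = r ^ (n+1) := by
      rw [show ((n:ℝ)+1) = ((n+1:ℕ):ℝ) by push_cast; ring]; exact Real.rpow_natCast r (n+1)
    rw [h3, h4, mul_pow]
    ring
  have hderiv : ∀ t ∈ Ioi x, HasDerivAt g (gammaPDFReal (n+1) r t) t := by
    intro t ht
    rw [hpdf_eq t ht]
    have := (hasDerivAt_gtail r n t).neg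
    exact this.congr_deriv (neg_neg _)
  have hpos : ∀ t ∈ Ioi x, 0 ≤ gammaPDFReal (n+1) r t :=
    fun t _ => gammaPDFReal_nonneg (by positivity) hr t
  have hcont : ContinuousWithinAt g (Ici x) x := by
    apply Continuous.continuousWithinAt
    fun_prop
  have htend : Tendsto g atTop (𝓝 0) := by
    have := (tendsto_gtail r hr n).neg
    simpa using this
  have := integral_Ioi_of_hasDerivAt_of_nonneg hcont hderiv hpos htend
  rw [this, hg]
  ring

lemma gamma_tail_nat_integrable (n : ℕ) {r : ℝ} (hr : 0 < r) {x : ℝ} (hx : 0 ≤ x) :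
    IntegrableOn (gammaPDFReal (n+1) r) (Ioi x) := by
  set g : ℝ → ℝ := fun t => -(Real.exp (-(r*t)) * ∑ m ∈ Finset.range (n+1), (r*t)^m / m.factorial)
    with hg
  have hderiv : ∀ t ∈ Ioi x, HasDerivAt g (gammaPDFReal (n+1) r t) t := by
    intro t ht
    have ht0 : 0 < t := lt_of_le_of_lt hx ht
    have hpdf_eq : gammaPDFReal (n+1) r t
        = r * Real.exp (-(r*t)) * (r*t)^n / n.factorial := by
      rw [gammaPDFReal, if_pos ht0.le]
      have h1 : ((n:ℝ)+1) - 1 = (n:ℝ) := by ring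
      have h2 : Real.Gamma ((n:ℝ)+1) = n.factorial := Real.Gamma_nat_eq_factorial n
      rw [h1, h2]
      have h3 : t ^ (n:ℝ) = t ^ n := Real.rpow_natCast t n
      have h4 : r ^ ((n:ℝ)+1) = r ^ (n+1) := by
        rw [show ((n:ℝ)+1) = ((n+1:ℕ):ℝ) by push_cast; ring]; exact Real.rpow_natCast r (n+1)
      rw [h3, h4, mul_pow]
      ring
    rw [hpdf_eq]
    have := (hasDerivAt_gtail r n t).neg
    exact this.congr_deriv (neg_neg _)
  have hpos : ∀ t ∈ Ioi x, 0 ≤ gammaPDFReal (n+1) r t :=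
    fun t _ => gammaPDFReal_nonneg (by positivity) hr t
  have hcont : ContinuousWithinAt g (Ici x) x := by
    apply Continuous.continuousWithinAt
    fun_prop
  have htend : Tendsto g atTop (𝓝 0) := by
    have := (tendsto_gtail r hr n).neg
    simpa using this
  exact integrableOn_Ioi_deriv_of_nonneg hcont hderiv hpos htend

lemma gamma_tail_nat_lintegral (n : ℕ) {r : ℝ} (hr : 0 < r) {x : ℝ} (hx : 0 ≤ x) :
    ∫⁻ t in Ioi x, gammaPDF (n+1) r t
      = ENNReal.ofReal (Real.exp (-(r*x)) * ∑ m ∈ Finset.range (n+1), (r*x)^m / m.factorial) := by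
  rw [← gamma_tail_nat n hr hx]
  exact (ofReal_integral_eq_lintegral_ofReal (gamma_tail_nat_integrable n hr hx)
    (Filter.Eventually.of_forall fun t => gammaPDFReal_nonneg (by positivity) hr t)).symm

lemma gamma_tail_mono {a b r : ℝ} (ha : 0 < a) (hab : a ≤ b) (hr : 0 < r) {x : ℝ} (hx : 0 ≤ x) :
    ∫⁻ t in Ioi x, gammaPDF a r t ≤ ∫⁻ t in Ioi x, gammaPDF b r t := by
  rcases eq_or_lt_of_le hab with rfl | hab'
  · exact le_refl _
  have hb : 0 < b := lt_trans ha hab'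
  set c : ℝ := b - a with hc
  have hc0 : 0 < c := by simp [hc]; linarith
  set D : ℝ := (r ^ a * Real.Gamma b) / (r ^ b * Real.Gamma a) with hD
  have hGa := Real.Gamma_pos_of_pos ha
  have hGb := Real.Gamma_pos_of_pos hb
  have hra := Real.rpow_pos_of_pos hr a
  have hrb := Real.rpow_pos_of_pos hr b
  have hDpos : 0 < D := by positivity
  set t0 : ℝ := D ^ c⁻¹ with ht0def
  have ht0 : 0 < t0 := Real.rpow_pos_of_pos hDpos _
  have ht0c : t0 ^ c = D := Real.rpow_inv_rpow hDpos.le hc0.ne'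
  have key : ∀ t : ℝ, 0 < t → gammaPDFReal b r t = gammaPDFReal a r t * (t ^ c / D) := by
    intro t ht
    rw [gammaPDFReal, gammaPDFReal, if_pos ht.le, if_pos ht.le]
    have h1 : t ^ (b - 1) = t ^ (a - 1) * t ^ c := by
      rw [← Real.rpow_add ht, hc]; ring_nf
    rw [h1, hD]
    have h2 : r ^ b = r ^ a * r ^ c := by rw [← Real.rpow_add hr, hc]; ring_nf
    rw [h2]
    field_simp
  have claimL : ∀ t : ℝ, 0 < t → t ≤ t0 → gammaPDFReal b r t ≤ gammaPDFReal a r t := by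
    intro t ht htle
    rw [key t ht]
    apply mul_le_of_le_one_right (gammaPDFReal_nonneg ha hr t)
    rw [div_le_one hDpos, ← ht0c]
    exact Real.rpow_le_rpow ht.le htle hc0.le
  have claimR : ∀ t : ℝ, t0 ≤ t → gammaPDFReal a r t ≤ gammaPDFReal b r t := by
    intro t htle
    have ht : 0 < t := lt_of_lt_of_le ht0 htle
    rw [key t ht]
    apply le_mul_of_one_le_right (gammaPDFReal_nonneg ha hr t)
    rw [le_div_iff₀ hDpos, one_mul, ← ht0c]
    exact Real.rpow_le_rpow ht0.le htle hc0.le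
  by_cases hxt : t0 ≤ x
  · apply setLIntegral_mono (measurable_gammaPDFReal b r).ennreal_ofReal
    intro t ht
    exact ENNReal.ofReal_le_ofReal (claimR t (le_of_lt (lt_of_le_of_lt hxt ht)))
  · push_neg at hxt
    have htotal : ∀ s : ℝ, 0 < s →
        (∫⁻ t in Iic x, gammaPDF s r t) + (∫⁻ t in Ioi x, gammaPDF s r t) = 1 := by
      intro s hs
      have h := lintegral_add_compl (gammaPDF s r) (measurableSet_Iic (a := x)) (μ := volume)
      rw [compl_Iic] at h
      rw [h]
      exact lintegral_gammaPDF_eq_one hs hr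
    have hLba : (∫⁻ t in Iic x, gammaPDF b r t) ≤ ∫⁻ t in Iic x, gammaPDF a r t := by
      apply setLIntegral_mono_ae (measurable_gammaPDFReal a r).ennreal_ofReal.aemeasurable
      have h0 : ∀ᵐ t : ℝ ∂(volume : Measure ℝ), t ≠ 0 := by
        have : (volume : Measure ℝ) {0} = 0 := measure_singleton 0
        rw [ae_iff]
        simpa [Classical.not_not] using this
      filter_upwards [h0] with t ht0' htx
      rcases lt_trichotomy t 0 with h | h | h
      · rw [gammaPDF_of_neg h]; exact zero_le
      · exact absurd h ht0'
      · exact ENNReal.ofReal_le_ofReal (claimL t h (le_of_lt (lt_of_le_of_lt htx hxt)))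
    have hFa : (∫⁻ t in Iic x, gammaPDF b r t) ≠ ⊤ := by
      refine ne_top_of_le_ne_top (by simp) (le_trans le_self_add (le_of_eq (htotal b hb)))
    have := htotal a ha
    have h2 := htotal b hb
    have hstep : (∫⁻ t in Ioi x, gammaPDF a r t) + (∫⁻ t in Iic x, gammaPDF b r t)
        ≤ (∫⁻ t in Ioi x, gammaPDF b r t) + (∫⁻ t in Iic x, gammaPDF b r t) := by
      calc (∫⁻ t in Ioi x, gammaPDF a r t) + (∫⁻ t in Iic x, gammaPDF b r t)
          ≤ (∫⁻ t in Ioi x, gammaPDF a r t) + (∫⁻ t in Iic x, gammaPDF a r t) := by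
            exact add_le_add_right hLba _
        _ = 1 := by rw [add_comm]; exact this
        _ = (∫⁻ t in Ioi x, gammaPDF b r t) + (∫⁻ t in Iic x, gammaPDF b r t) := by
            rw [add_comm]; exact h2.symm
    exact (ENNReal.add_le_add_iff_right hFa).mp hstep

lemma exp_mul_pow_div_factorial_le {x : ℝ} (hx : 0 ≤ x) (m : ℕ) :
    Real.exp (-x) * (x ^ m / m.factorial) ≤ 1 := by
  have h1 : x ^ m / m.factorial ≤ Real.exp x := Real.pow_div_factorial_le_exp x hx m
  calc Real.exp (-x) * (x ^ m / m.factorial) ≤ Real.exp (-x) * Real.exp x :=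
        mul_le_mul_of_nonneg_left h1 (Real.exp_pos _).le
    _ = 1 := by rw [← Real.exp_add]; simp

noncomputable def Sfun (c : ℝ) (n : ℕ) (p : ℝ) : ℝ :=
  Real.exp (-(p/c)) * ∑ m ∈ Finset.range n, (p/c)^m / m.factorial

lemma Sfun_nonneg {c : ℝ} (hc : 0 < c) (n : ℕ) {p : ℝ} (hp : 0 ≤ p) : 0 ≤ Sfun c n p := by
  unfold Sfun
  have : 0 ≤ p / c := by positivity
  positivity

lemma Sfun_le {c : ℝ} (hc : 0 < c) (n : ℕ) {p : ℝ} (hp : 0 ≤ p) : Sfun c n p ≤ n := by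
  unfold Sfun
  rw [Finset.mul_sum]
  calc (∑ m ∈ Finset.range n, Real.exp (-(p/c)) * ((p/c)^m / m.factorial))
      ≤ ∑ m ∈ Finset.range n, (1:ℝ) := by
        apply Finset.sum_le_sum
        intro m _
        exact exp_mul_pow_div_factorial_le (by positivity) m
    _ = n := by simp

lemma Sfun_measurable (c : ℝ) (n : ℕ) : Measurable (Sfun c n) := by
  unfold Sfun
  fun_prop

lemma withDensity_gammaDensity_eq {k θ : ℝ} (hk : 0 < k) (hθ : 0 < θ) :
    (volume.withDensity fun x => ENNReal.ofReal (gammaDensity k θ x))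
      = ProbabilityTheory.gammaMeasure k θ⁻¹ := by
  rw [ProbabilityTheory.gammaMeasure]
  apply withDensity_congr_ae
  have h0 : ∀ᵐ t : ℝ ∂(volume : Measure ℝ), t ≠ 0 := by
    have : (volume : Measure ℝ) {0} = 0 := measure_singleton 0
    rw [ae_iff]
    simpa [Classical.not_not] using this
  filter_upwards [h0] with t ht0
  rcases lt_trichotomy t 0 with h | h | h
  · rw [ProbabilityTheory.gammaPDF_of_neg h, gammaDensity,
      Set.indicator_of_notMem (by simp only [mem_Ioi, not_lt]; linarith) _]
    simp
  · exact absurd h ht0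
  · rw [ProbabilityTheory.gammaPDF_of_nonneg h.le, gammaDensity, Set.indicator_of_mem (mem_Ioi.mpr h) _]
    congr 1
    rw [Real.inv_rpow hθ.le]
    have hθk : (0:ℝ) < θ ^ k := Real.rpow_pos_of_pos hθ k
    have hG : (0:ℝ) < Real.Gamma k := Real.Gamma_pos_of_pos hk
    rw [show -t/θ = -(θ⁻¹ * t) by ring]
    field_simp

theorem stmt_0 {Ω : Type*} [MeasurableSpace Ω] (μ : Measure Ω) [IsProbabilityMeasure μ]
    (P J : Ω → ℝ) (hPm : Measurable P) (hJm : Measurable J)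
    (hPnn : ∀ ω, 0 ≤ P ω)
    (k θ β : ℝ) (hk : 0 < k) (hθ : 0 < θ) (hβ : 0 < β)
    (hJ : IsGammaLaw μ J k θ)
    (hindep : IndepFun P J μ) :
    (∑ m ∈ Finset.range ⌊k⌋₊,
        (1 / (Nat.factorial m) : ℝ) *
          ∫ ω, (P ω / (θ * β)) ^ m * Real.exp (-(P ω / (θ * β))) ∂μ)
      ≤ (μ {ω | P ω ≤ β * J ω}).toReal ∧
    (μ {ω | P ω ≤ β * J ω}).toReal ≤
      ∑ m ∈ Finset.range ⌈k⌉₊,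
        (1 / (Nat.factorial m) : ℝ) *
          ∫ ω, (P ω / (θ * β)) ^ m * Real.exp (-(P ω / (θ * β))) ∂μ := by
  have hr : (0:ℝ) < θ⁻¹ := inv_pos.mpr hθ
  set c : ℝ := θ * β with hcdef
  have hcpos : 0 < c := mul_pos hθ hβ
  have hρprob : IsProbabilityMeasure (μ.map P) := Measure.isProbabilityMeasure_map hPm.aemeasurable
  -- target sums rewritten
  have targetEq : ∀ n : ℕ,
      (∑ m ∈ Finset.range n,
        (1 / (Nat.factorial m) : ℝ) * ∫ ω, (P ω / c) ^ m * Real.exp (-(P ω / c)) ∂μ)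
      = ∫ ω, Sfun c n (P ω) ∂μ := by
    intro n
    have hint : ∀ m : ℕ, Integrable
        (fun ω => Real.exp (-(P ω / c)) * ((P ω / c) ^ m / m.factorial)) μ := by
      intro m
      apply Integrable.mono' (integrable_const (1:ℝ))
      · exact (((hPm.div_const c).neg.exp).mul
          (((hPm.div_const c).pow_const m).div_const _)).aestronglyMeasurable
      · refine Filter.Eventually.of_forall fun ω => ?_
        have hx : 0 ≤ P ω / c := by have := hPnn ω; positivity
        rw [Real.norm_eq_abs, abs_of_nonneg (by positivity)]
        exact exp_mul_pow_div_factorial_le hx m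
    have h1 : ∀ ω, Sfun c n (P ω)
        = ∑ m ∈ Finset.range n, Real.exp (-(P ω / c)) * ((P ω / c) ^ m / m.factorial) := by
      intro ω
      rw [Sfun, Finset.mul_sum]
    calc (∑ m ∈ Finset.range n,
        (1 / (Nat.factorial m) : ℝ) * ∫ ω, (P ω / c) ^ m * Real.exp (-(P ω / c)) ∂μ)
        = ∑ m ∈ Finset.range n,
            ∫ ω, Real.exp (-(P ω / c)) * ((P ω / c) ^ m / m.factorial) ∂μ := by
          apply Finset.sum_congr rfl
          intro m _
          rw [← integral_const_mul]
          congr 1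
          funext ω
          ring
      _ = ∫ ω, ∑ m ∈ Finset.range n,
            Real.exp (-(P ω / c)) * ((P ω / c) ^ m / m.factorial) ∂μ :=
          (integral_finset_sum _ (fun m _ => hint m)).symm
      _ = ∫ ω, Sfun c n (P ω) ∂μ := by
          congr 1; funext ω; rw [h1 ω]
  -- event measure as lintegral
  have hmapJ : μ.map J = gammaMeasure k θ⁻¹ := by
    have h := hJ
    unfold IsGammaLaw at h
    rw [h]
    exact withDensity_gammaDensity_eq hk hθ
  have hsMeas : MeasurableSet {q : ℝ × ℝ | q.1 ≤ β * q.2} :=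
    measurableSet_le measurable_fst (measurable_snd.const_mul β)
  have hE : μ {ω | P ω ≤ β * J ω}
      = ∫⁻ p, (∫⁻ t in Set.Ioi (p/β), gammaPDF k θ⁻¹ t) ∂(μ.map P) := by
    have h1 : {ω | P ω ≤ β * J ω} = (fun ω => (P ω, J ω)) ⁻¹' {q : ℝ × ℝ | q.1 ≤ β * q.2} := rfl
    rw [h1, ← Measure.map_apply (hPm.prodMk hJm) hsMeas,
      (indepFun_iff_map_prod_eq_prod_map_map hPm.aemeasurable hJm.aemeasurable).mp hindep,
      Measure.prod_apply hsMeas]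
    apply lintegral_congr
    intro p
    have h2 : (Prod.mk p ⁻¹' {q : ℝ × ℝ | q.1 ≤ β * q.2}) = Set.Ici (p/β) := by
      ext j
      simp only [Set.mem_preimage, Set.mem_setOf_eq, Set.mem_Ici]
      rw [div_le_iff₀ hβ, mul_comm]
    rw [h2, hmapJ, gammaMeasure, withDensity_apply _ measurableSet_Ici,
      ← MeasureTheory.restrict_Ioi_eq_restrict_Ici]
  -- pointwise identification of Sfun with integer gamma tails
  have hofReal : ∀ n : ℕ, ∀ p : ℝ, 0 ≤ p →
      ENNReal.ofReal (Sfun c (n+1) p) = ∫⁻ t in Set.Ioi (p/β), gammaPDF (n+1) θ⁻¹ t := by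
    intro n p hp
    have hx : 0 ≤ p / β := by positivity
    rw [gamma_tail_nat_lintegral n hr hx]
    congr 1
    rw [Sfun]
    have harg : θ⁻¹ * (p / β) = p / c := by rw [hcdef]; field_simp
    rw [harg]
  have haePos : ∀ᵐ p ∂(μ.map P), 0 ≤ p := by
    rw [ae_map_iff hPm.aemeasurable (measurableSet_Ici (a := (0:ℝ)))]
    exact Filter.Eventually.of_forall hPnn
  -- transfer of the Sfun lintegral
  have hSlint : ∀ n : ℕ,
      ∫⁻ p, ENNReal.ofReal (Sfun c n p) ∂(μ.map P)
        = ∫⁻ ω, ENNReal.ofReal (Sfun c n (P ω)) ∂μ :=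
    fun n => lintegral_map ((Sfun_measurable c n).ennreal_ofReal) hPm
  have hSreal : ∀ n : ℕ,
      ∫ ω, Sfun c n (P ω) ∂μ = (∫⁻ p, ENNReal.ofReal (Sfun c n p) ∂(μ.map P)).toReal := by
    intro n
    rw [hSlint n]
    rw [integral_eq_lintegral_of_nonneg_ae
      (Filter.Eventually.of_forall fun ω => Sfun_nonneg hcpos n (hPnn ω))
      ((Sfun_measurable c n).comp hPm).aestronglyMeasurable]
  have hSfin : ∀ n : ℕ, (∫⁻ p, ENNReal.ofReal (Sfun c n p) ∂(μ.map P)) ≠ ⊤ := by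
    intro n
    have hb : ∫⁻ p, ENNReal.ofReal (Sfun c n p) ∂(μ.map P) ≤ n := by
      calc ∫⁻ p, ENNReal.ofReal (Sfun c n p) ∂(μ.map P)
          ≤ ∫⁻ _q, (n : ℝ≥0∞) ∂(μ.map P) := by
            apply lintegral_mono_ae
            filter_upwards [haePos] with p hp
            calc ENNReal.ofReal (Sfun c n p) ≤ ENNReal.ofReal (n:ℝ) :=
                  ENNReal.ofReal_le_ofReal (Sfun_le hcpos n hp)
              _ = (n : ℝ≥0∞) := by simp [ENNReal.ofReal_natCast]
        _ = n := by simp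
    exact ne_top_of_le_ne_top (by simp) hb
  have hEfin : μ {ω | P ω ≤ β * J ω} ≠ ⊤ := measure_ne_top μ _
  constructor
  · -- lower bound
    rcases Nat.eq_zero_or_pos ⌊k⌋₊ with h0 | hpos
    · rw [h0]
      simp only [Finset.range_zero, Finset.sum_empty]
      exact ENNReal.toReal_nonneg
    · obtain ⟨n, hn⟩ : ∃ n : ℕ, ⌊k⌋₊ = n + 1 := ⟨⌊k⌋₊ - 1, by omega⟩
      have hka : ((n:ℝ)+1) ≤ k := by
        have h := Nat.floor_le hk.le
        rw [hn] at h
        push_cast at h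
        exact h
      have hlow : ∫⁻ p, ENNReal.ofReal (Sfun c (n+1) p) ∂(μ.map P)
          ≤ μ {ω | P ω ≤ β * J ω} := by
        rw [hE]
        apply lintegral_mono_ae
        filter_upwards [haePos] with p hp
        rw [hofReal n p hp]
        exact gamma_tail_mono (x := p/β) (by positivity) hka hr (by positivity)
      rw [hn, targetEq (n+1), hSreal (n+1)]
      exact ENNReal.toReal_mono hEfin hlow
  · -- upper bound
    have hpos : 0 < ⌈k⌉₊ := Nat.ceil_pos.mpr hk
    obtain ⟨n, hn⟩ : ∃ n : ℕ, ⌈k⌉₊ = n + 1 := ⟨⌈k⌉₊ - 1, by omega⟩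
    have hka : k ≤ ((n:ℝ)+1) := by
      have h := Nat.le_ceil k
      rw [hn] at h
      push_cast at h
      exact h
    have hup : μ {ω | P ω ≤ β * J ω}
        ≤ ∫⁻ p, ENNReal.ofReal (Sfun c (n+1) p) ∂(μ.map P) := by
      rw [hE]
      apply lintegral_mono_ae
      filter_upwards [haePos] with p hp
      rw [hofReal n p hp]
      exact gamma_tail_mono (x := p/β) hk hka hr (by positivity)
    rw [hn, targetEq (n+1), hSreal (n+1)]
    exact ENNReal.toReal_mono (hSfin (n+1)) hup
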